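/- For complex q, z with |q| < 1, z ≠ 0, and suitable convergence, Σ_{n≥0} q^{2n²+2n} / ((q/z; q²)_{n+1} (zq; q²)_{n+1}) = Σ_{n≥0} z^{−n} qⁿ / (zq; q²)_{n+1}. -/

import Mathlib

open scoped BigOperators

/-- Finite q-Pochhammer symbol `(a; q)_n`. -/
noncomputable def qPoch (a q : ℂ) (n : ℕ) : ℂ :=
  ∏ k ∈ Finset.range n, (1 - a * q ^ k)

/-- Infinite q-Pochhammer symbol `(a; q)_∞`. -/
noncomputable def qPochInf (a q : ℂ) : ℂ :=
  ∏' k : ℕ, (1 - a * q ^ k)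

namespace Omega211

open Finset Filter

noncomputable def R (a b Q : ℂ) : ℂ := ∑' n : ℕ, a ^ n / qPoch b Q (n + 1)

lemma qPoch_zero (b Q : ℂ) : qPoch b Q 0 = 1 := by simp [qPoch]

lemma qPoch_one (b Q : ℂ) : qPoch b Q 1 = 1 - b := by simp [qPoch]

lemma qPoch_succ (b Q : ℂ) (n : ℕ) :
    qPoch b Q (n + 1) = qPoch b Q n * (1 - b * Q ^ n) :=
  Finset.prod_range_succ _ _

lemma qPoch_succ' (b Q : ℂ) (n : ℕ) :
    qPoch b Q (n + 1) = (1 - b) * qPoch (b * Q) Q n := by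
  rw [qPoch, Finset.prod_range_succ']
  have h : ∀ x : ℕ, 1 - b * Q ^ (x + 1) = 1 - b * Q * Q ^ x := by intro x; ring
  simp_rw [h]
  rw [qPoch]
  ring

lemma qPoch_add (b Q : ℂ) (m n : ℕ) :
    qPoch b Q (m + n) = qPoch b Q m * qPoch (b * Q ^ m) Q n := by
  rw [qPoch, Finset.prod_range_add]
  have h : ∀ x : ℕ, 1 - b * Q ^ (m + x) = 1 - b * Q ^ m * Q ^ x := by
    intro x; rw [pow_add, mul_assoc]
  simp_rw [h]
  rfl

lemma qPoch_ne_zero (b Q : ℂ) (hb : ∀ k, 1 - b * Q ^ k ≠ 0) (n : ℕ) :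
    qPoch b Q n ≠ 0 := by
  rw [qPoch, Finset.prod_ne_zero_iff]
  exact fun k _ => hb k

/-- lower bound auxiliary : product of norms ≥ 1 - sum of norms -/
lemma aux_prod_lb (g : ℕ → ℂ) (m : ℕ) :
    1 - ∑ j ∈ range m, ‖g j‖ ≤ ∏ j ∈ range m, ‖1 - g j‖ := by
  induction m with
  | zero => simp
  | succ m ih =>
    rw [Finset.sum_range_succ, Finset.prod_range_succ]
    have hP : (0:ℝ) ≤ ∏ j ∈ range m, ‖1 - g j‖ :=
      Finset.prod_nonneg fun j _ => norm_nonneg _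
    have hS : (0:ℝ) ≤ ∑ j ∈ range m, ‖g j‖ :=
      Finset.sum_nonneg fun j _ => norm_nonneg _
    have h1 : 1 - ‖g m‖ ≤ ‖1 - g m‖ := by
      calc 1 - ‖g m‖ = ‖(1:ℂ)‖ - ‖g m‖ := by rw [norm_one]
      _ ≤ ‖1 - g m‖ := norm_sub_norm_le _ _
    have h2 : (0:ℝ) ≤ ‖1 - g m‖ := norm_nonneg _
    have h3 : (0:ℝ) ≤ ‖g m‖ := norm_nonneg _
    nlinarith [mul_le_mul_of_nonneg_right ih h2]

lemma geom_sum_bound {r : ℝ} (h0 : 0 ≤ r) (h1 : r < 1) (m : ℕ) :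
    ∑ j ∈ range m, r ^ j ≤ (1 - r)⁻¹ := by
  calc ∑ j ∈ range m, r ^ j ≤ ∑' j : ℕ, r ^ j :=
        Summable.sum_le_tsum _ (fun i _ => pow_nonneg h0 i) (summable_geometric_of_lt_one h0 h1)
  _ = (1 - r)⁻¹ := tsum_geometric_of_lt_one h0 h1

lemma exists_lower (b Q : ℂ) (hQ : ‖Q‖ < 1) (hb : ∀ k, 1 - b * Q ^ k ≠ 0) :
    ∃ c : ℝ, 0 < c ∧ ∀ n, c ≤ ‖qPoch b Q n‖ := by
  have hQ0 : (0:ℝ) ≤ ‖Q‖ := norm_nonneg _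
  -- choose K with (‖b‖+1) * ‖Q‖^K ≤ (1-‖Q‖)/2
  have hQ1 : (0:ℝ) < 1 - ‖Q‖ := by linarith
  obtain ⟨K, hK⟩ := exists_pow_lt_of_lt_one
    (x := (1 - ‖Q‖) / (2 * (‖b‖ + 1))) (div_pos hQ1 (by positivity)) hQ
  have hb1 : (0:ℝ) < ‖b‖ + 1 := by positivity
  have hKb : ‖b‖ * ‖Q‖ ^ K * (1 - ‖Q‖)⁻¹ ≤ 1 / 2 := by
    have h1 : ‖b‖ * ‖Q‖ ^ K ≤ (‖b‖ + 1) * ‖Q‖ ^ K := by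
      have := pow_nonneg hQ0 K; nlinarith
    have h2 : (‖b‖ + 1) * ‖Q‖ ^ K ≤ (1 - ‖Q‖) / 2 := by
      rw [div_mul_eq_div_div] at hK
      have := hK.le
      rw [le_div_iff₀ hb1] at this
      linarith [this]
    have h3 : (0:ℝ) < 1 - ‖Q‖ := by linarith
    rw [mul_inv_le_iff₀ h3] -- may need name fix
    nlinarith
  -- for n = K + m
  have key : ∀ m, ‖qPoch b Q K‖ / 2 ≤ ‖qPoch b Q (K + m)‖ := by
    intro m
    rw [qPoch_add, norm_mul]
    have e1 : qPoch (b * Q ^ K) Q m = ∏ j ∈ range m, (1 - b * Q ^ (K + j)) := by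
      rw [qPoch]
      congr 1; funext j; rw [pow_add, mul_assoc]
    have e2 : ‖qPoch (b * Q ^ K) Q m‖ = ∏ j ∈ range m, ‖1 - b * Q ^ (K + j)‖ := by
      rw [e1, norm_prod]
    have h4 : (1:ℝ) - ∑ j ∈ range m, ‖b * Q ^ (K + j)‖ ≤ ‖qPoch (b * Q ^ K) Q m‖ := by
      rw [e2]; exact aux_prod_lb _ m
    have h5 : ∑ j ∈ range m, ‖b * Q ^ (K + j)‖ ≤ 1 / 2 := by
      calc ∑ j ∈ range m, ‖b * Q ^ (K + j)‖
          = ‖b‖ * ‖Q‖ ^ K * ∑ j ∈ range m, ‖Q‖ ^ j := by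
            rw [Finset.mul_sum]; congr 1; funext j
            rw [norm_mul, norm_pow, pow_add]; ring
      _ ≤ ‖b‖ * ‖Q‖ ^ K * (1 - ‖Q‖)⁻¹ := by
            apply mul_le_mul_of_nonneg_left (geom_sum_bound hQ0 hQ m) (by positivity)
      _ ≤ 1 / 2 := hKb
    have h6 : (1:ℝ)/2 ≤ ‖qPoch (b * Q ^ K) Q m‖ := by linarith
    calc ‖qPoch b Q K‖ / 2 = ‖qPoch b Q K‖ * (1/2) := by ring
    _ ≤ ‖qPoch b Q K‖ * ‖qPoch (b * Q ^ K) Q m‖ :=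
        mul_le_mul_of_nonneg_left h6 (norm_nonneg _)
  -- min over small n
  have hne : (range (K + 1)).Nonempty := nonempty_range_add_one
  set c0 : ℝ := (range (K + 1)).inf' hne (fun n => ‖qPoch b Q n‖) with hc0
  have hc0pos : 0 < c0 := by
    rw [hc0, Finset.lt_inf'_iff]
    intro i _
    exact norm_pos_iff.mpr (qPoch_ne_zero b Q hb i)
  refine ⟨min c0 (‖qPoch b Q K‖ / 2), ?_, ?_⟩
  · apply lt_min hc0pos
    have h := norm_pos_iff.mpr (qPoch_ne_zero b Q hb K)
    positivity
  · intro n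
    rcases le_or_gt n K with h | h
    · refine le_trans (min_le_left _ _) ?_
      exact Finset.inf'_le _ (Finset.mem_range.mpr (Nat.lt_succ_of_le h))
    · obtain ⟨m, rfl⟩ : ∃ m, n = K + m := ⟨n - K, by omega⟩
      exact le_trans (min_le_right _ _) (key m)

lemma exists_upper (b Q : ℂ) (hQ : ‖Q‖ < 1) :
    ∃ D : ℝ, 1 ≤ D ∧ ∀ n, ‖qPoch b Q n‖ ≤ D := by
  have hQ0 : (0:ℝ) ≤ ‖Q‖ := norm_nonneg _
  refine ⟨Real.exp (‖b‖ * (1 - ‖Q‖)⁻¹), ?_, ?_⟩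
  · have hQ1 : (0:ℝ) < 1 - ‖Q‖ := by linarith
    exact Real.one_le_exp (mul_nonneg (norm_nonneg _) (inv_nonneg.mpr hQ1.le))
  · intro n
    calc ‖qPoch b Q n‖ ≤ ∏ k ∈ range n, ‖1 - b * Q ^ k‖ := norm_prod_le _ _
    _ ≤ ∏ k ∈ range n, Real.exp (‖b‖ * ‖Q‖ ^ k) := by
        apply Finset.prod_le_prod (fun k _ => norm_nonneg _)
        intro k _
        calc ‖1 - b * Q ^ k‖ ≤ ‖(1:ℂ)‖ + ‖b * Q ^ k‖ := norm_sub_le _ _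
        _ = ‖b‖ * ‖Q‖ ^ k + 1 := by rw [norm_one, norm_mul, norm_pow]; ring
        _ ≤ Real.exp (‖b‖ * ‖Q‖ ^ k) := Real.add_one_le_exp _
    _ = Real.exp (∑ k ∈ range n, ‖b‖ * ‖Q‖ ^ k) := (Real.exp_sum _ _).symm
    _ ≤ Real.exp (‖b‖ * (1 - ‖Q‖)⁻¹) := by
        apply Real.exp_le_exp.mpr
        rw [← Finset.mul_sum]
        apply mul_le_mul_of_nonneg_left (geom_sum_bound hQ0 hQ n) (norm_nonneg _)

lemma summable_R (a b Q : ℂ) (ha : ‖a‖ < 1) {c : ℝ} (hc : 0 < c)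
    (hlb : ∀ n, c ≤ ‖qPoch b Q (n + 1)‖) :
    Summable (fun n : ℕ => a ^ n / qPoch b Q (n + 1)) := by
  apply Summable.of_norm_bounded (g := fun n => c⁻¹ * ‖a‖ ^ n)
    ((summable_geometric_of_lt_one (norm_nonneg a) ha).mul_left _)
  intro n
  rw [norm_div, norm_pow, inv_mul_eq_div, div_le_div_iff₀ (lt_of_lt_of_le hc (hlb n)) hc]
  apply mul_le_mul_of_nonneg_left (hlb n) (pow_nonneg (norm_nonneg _) _)


lemma funeq (a b Q : ℂ) (ha : ‖a‖ < 1)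
    (hb : ∀ k, 1 - b * Q ^ k ≠ 0)
    (h1 : Summable (fun n : ℕ => a ^ n / qPoch b Q (n + 1)))
    (h2 : Summable (fun n : ℕ => (a * Q) ^ n / qPoch (b * Q) Q (n + 1))) :
    R a b Q = (1 - a)⁻¹ *
      ((1 - b)⁻¹ + a * b * Q * (1 - b)⁻¹ * R (a * Q) (b * Q) Q) := by
  have ha1 : (1:ℂ) - a ≠ 0 := by
    intro h
    have : a = 1 := by linear_combination -h
    rw [this] at ha; simp at ha
  have hb0 : (1:ℂ) - b ≠ 0 := by
    have := hb 0; simpa using this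
  have key : (1 - a) * R a b Q =
      (1 - b)⁻¹ + a * b * Q * (1 - b)⁻¹ * R (a * Q) (b * Q) Q := by
    have hshift : Summable (fun n : ℕ => a ^ (n + 1) / qPoch b Q (n + 1 + 1)) := by
      exact_mod_cast (summable_nat_add_iff 1).mpr h1
    have hmul : Summable (fun n : ℕ => a ^ (n + 1) / qPoch b Q (n + 1)) := by
      have := h1.mul_left a
      refine this.congr (fun n => ?_)
      rw [← mul_div_assoc, ← pow_succ']
    have e1 : a * R a b Q = ∑' n : ℕ, a ^ (n + 1) / qPoch b Q (n + 1) := by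
      rw [R, ← tsum_mul_left]
      congr 1; funext n
      rw [← mul_div_assoc, ← pow_succ']
    have e2 : R a b Q = (1 - b)⁻¹ + ∑' n : ℕ, a ^ (n + 1) / qPoch b Q (n + 1 + 1) := by
      rw [R, h1.tsum_eq_zero_add]
      congr 1
      simp [qPoch_one, one_div]
    have e3 : ∀ n : ℕ, a ^ (n + 1) / qPoch b Q (n + 1 + 1) - a ^ (n + 1) / qPoch b Q (n + 1)
        = a * b * Q * (1 - b)⁻¹ * ((a * Q) ^ n / qPoch (b * Q) Q (n + 1)) := by
      intro n
      have hp1 : qPoch b Q (n + 1) ≠ 0 := qPoch_ne_zero b Q hb _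
      have hp2 : qPoch (b * Q) Q (n + 1) ≠ 0 := by
        intro h
        apply qPoch_ne_zero b Q hb (n + 2)
        rw [qPoch_succ', h, mul_zero]
      have hrel : (1 - b) * qPoch (b * Q) Q (n + 1)
          = qPoch b Q (n + 1) * (1 - b * Q ^ (n + 1)) := by
        rw [← qPoch_succ', qPoch_succ]
      have e4 : qPoch b Q (n + 1 + 1) = (1 - b) * qPoch (b * Q) Q (n + 1) := qPoch_succ' b Q (n+1)
      have hne1 : (1 - b) * qPoch (b * Q) Q (n + 1) ≠ 0 := mul_ne_zero hb0 hp2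
      have h5 : a ^ (n+1) / qPoch b Q (n+1)
          = a ^ (n+1) * (1 - b * Q ^ (n+1)) / ((1 - b) * qPoch (b * Q) Q (n+1)) := by
        rw [div_eq_div_iff hp1 hne1]
        linear_combination a ^ (n+1) * hrel
      rw [e4, h5]
      field_simp
      ring
    calc (1 - a) * R a b Q = R a b Q - a * R a b Q := by ring
    _ = (1 - b)⁻¹ + ((∑' n : ℕ, a ^ (n + 1) / qPoch b Q (n + 1 + 1))
          - ∑' n : ℕ, a ^ (n + 1) / qPoch b Q (n + 1)) := by
        rw [e1, e2]; ring
    _ = (1 - b)⁻¹ + ∑' n : ℕ, (a ^ (n + 1) / qPoch b Q (n + 1 + 1)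
          - a ^ (n + 1) / qPoch b Q (n + 1)) := by
        rw [hshift.tsum_sub hmul]
    _ = (1 - b)⁻¹ + a * b * Q * (1 - b)⁻¹ * R (a * Q) (b * Q) Q := by
        congr 1
        rw [R, ← tsum_mul_left]
        exact tsum_congr e3
  rw [← key, ← mul_assoc, inv_mul_cancel₀ ha1, one_mul]

noncomputable def W (a b Q : ℂ) (m : ℕ) : ℂ :=
  (a * b) ^ m * Q ^ (m ^ 2) / (qPoch a Q m * qPoch b Q m)

noncomputable def T (a b Q : ℂ) (m : ℕ) : ℂ :=
  (a * b) ^ m * Q ^ (m ^ 2) / (qPoch a Q (m + 1) * qPoch b Q (m + 1))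

lemma main (a b Q : ℂ) (hQ : ‖Q‖ < 1) (ha : ‖a‖ < 1) (hab : ‖a * b * Q‖ < 1)
    (hbne : ∀ k, 1 - b * Q ^ k ≠ 0) (hane : ∀ k, 1 - a * Q ^ k ≠ 0) :
    ∑' m : ℕ, T a b Q m = R a b Q := by
  obtain ⟨cb, hcb, hcbl⟩ := exists_lower b Q hQ hbne
  obtain ⟨ca, hca, hcal⟩ := exists_lower a Q hQ hane
  obtain ⟨Db, hDb1, hDbu⟩ := exists_upper b Q hQ
  have hQle1 : ‖Q‖ ≤ 1 := hQ.le
  have hb' : ∀ M k, 1 - b * Q ^ M * Q ^ k ≠ 0 := by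
    intro M k; rw [mul_assoc, ← pow_add]; exact hbne (M + k)
  have ha' : ∀ M k, 1 - a * Q ^ M * Q ^ k ≠ 0 := by
    intro M k; rw [mul_assoc, ← pow_add]; exact hane (M + k)
  -- tail lower bound
  have htail : ∀ M n, cb / Db ≤ ‖qPoch (b * Q ^ M) Q n‖ := by
    intro M n
    have h1 : qPoch b Q M * qPoch (b * Q ^ M) Q n = qPoch b Q (M + n) := (qPoch_add b Q M n).symm
    have h2 : cb ≤ ‖qPoch b Q M‖ * ‖qPoch (b * Q ^ M) Q n‖ := by
      rw [← norm_mul, h1]; exact hcbl (M + n)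
    have hDb0 : (0:ℝ) < Db := lt_of_lt_of_le one_pos hDb1
    rw [div_le_iff₀ hDb0]
    calc cb ≤ ‖qPoch b Q M‖ * ‖qPoch (b * Q ^ M) Q n‖ := h2
      _ ≤ Db * ‖qPoch (b * Q ^ M) Q n‖ :=
          mul_le_mul_of_nonneg_right (hDbu M) (norm_nonneg _)
      _ = ‖qPoch (b * Q ^ M) Q n‖ * Db := by ring
  have hcD : 0 < cb / Db := div_pos hcb (lt_of_lt_of_le one_pos hDb1)
  -- norm of a * Q^M
  have haM : ∀ M : ℕ, ‖a * Q ^ M‖ < 1 := by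
    intro M
    rw [norm_mul, norm_pow]
    calc ‖a‖ * ‖Q‖ ^ M ≤ ‖a‖ * 1 :=
        mul_le_mul_of_nonneg_left (pow_le_one₀ (norm_nonneg _) hQle1) (norm_nonneg _)
    _ = ‖a‖ := mul_one _
    _ < 1 := ha
  -- summability at every stage
  have hsum : ∀ M : ℕ, Summable (fun n : ℕ => (a * Q ^ M) ^ n / qPoch (b * Q ^ M) Q (n + 1)) := by
    intro M
    exact summable_R _ _ _ (haM M) hcD (fun n => htail M (n + 1))
  -- iteration
  have iter : ∀ M : ℕ, R a b Q
      = (∑ m ∈ range M, T a b Q m) + W a b Q M * R (a * Q ^ M) (b * Q ^ M) Q := by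
    intro M
    induction M with
    | zero => simp [W, qPoch_zero]
    | succ M ih =>
      rw [ih]
      have hfe := funeq (a * Q ^ M) (b * Q ^ M) Q (haM M) (hb' M) (hsum M) ?hs2
      case hs2 =>
        have := hsum (M + 1)
        convert this using 3 with n
        · rw [pow_succ]; ring
        · congr 1; rw [pow_succ]; ring
      rw [hfe, Finset.sum_range_succ]
      have hpa : qPoch a Q M ≠ 0 := qPoch_ne_zero a Q hane M
      have hpb : qPoch b Q M ≠ 0 := qPoch_ne_zero b Q hbne M
      have hpa1 : qPoch a Q (M + 1) ≠ 0 := qPoch_ne_zero a Q hane (M + 1)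
      have hpb1 : qPoch b Q (M + 1) ≠ 0 := qPoch_ne_zero b Q hbne (M + 1)
      have h1a : (1 : ℂ) - a * Q ^ M ≠ 0 := hane M
      have h1b : (1 : ℂ) - b * Q ^ M ≠ 0 := hbne M
      have ea : qPoch a Q (M + 1) = qPoch a Q M * (1 - a * Q ^ M) := qPoch_succ a Q M
      have eb : qPoch b Q (M + 1) = qPoch b Q M * (1 - b * Q ^ M) := qPoch_succ b Q M
      have hW1 : W a b Q M * ((1 - a * Q ^ M)⁻¹ * (1 - b * Q ^ M)⁻¹) = T a b Q M := by
        rw [W, T, ea, eb]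
        field_simp
        try ring
        try tauto
      have hW2 : W a b Q M * ((1 - a * Q ^ M)⁻¹ *
            (a * Q ^ M * (b * Q ^ M) * Q * (1 - b * Q ^ M)⁻¹)) = W a b Q (M + 1) := by
        rw [W, W, ea, eb]
        have hexp1 : (M + 1) ^ 2 = M ^ 2 + (2 * M + 1) := by ring
        rw [hexp1, pow_add]
        field_simp
        try ring
        try tauto
      have hRnext : R (a * Q ^ M * Q) (b * Q ^ M * Q) Q
          = R (a * Q ^ (M + 1)) (b * Q ^ (M + 1)) Q := by
        rw [pow_succ]; ring_nf
      rw [hRnext] at hfe ⊢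
      calc (∑ m ∈ range M, T a b Q m) + W a b Q M * ((1 - a * Q ^ M)⁻¹ *
            ((1 - b * Q ^ M)⁻¹ + a * Q ^ M * (b * Q ^ M) * Q * (1 - b * Q ^ M)⁻¹ *
              R (a * Q ^ (M + 1)) (b * Q ^ (M + 1)) Q))
          = (∑ m ∈ range M, T a b Q m) + (T a b Q M
            + W a b Q (M + 1) * R (a * Q ^ (M + 1)) (b * Q ^ (M + 1)) Q) := by
            rw [← hW1, ← hW2]; ring
      _ = _ := by ring
  -- bounds
  have hQ0 : (0:ℝ) ≤ ‖Q‖ := norm_nonneg _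
  have habn : (0:ℝ) ≤ ‖a * b * Q‖ := norm_nonneg _
  have hnum : ∀ M : ℕ, ‖a * b‖ ^ M * ‖Q‖ ^ (M ^ 2) ≤ ‖a * b * Q‖ ^ M := by
    intro M
    have h1 : ‖Q‖ ^ (M ^ 2) ≤ ‖Q‖ ^ M :=
      pow_le_pow_of_le_one hQ0 hQle1 (Nat.le_self_pow two_ne_zero M)
    calc ‖a * b‖ ^ M * ‖Q‖ ^ (M ^ 2) ≤ ‖a * b‖ ^ M * ‖Q‖ ^ M :=
        mul_le_mul_of_nonneg_left h1 (pow_nonneg (norm_nonneg _) _)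
    _ = ‖a * b * Q‖ ^ M := by rw [norm_mul (a * b) Q, mul_pow]
  have hWb : ∀ M : ℕ, ‖W a b Q M‖ ≤ (ca * cb)⁻¹ * ‖a * b * Q‖ ^ M := by
    intro M
    rw [W, norm_div, norm_mul, norm_mul, norm_pow, norm_pow, inv_mul_eq_div]
    exact div_le_div₀ (pow_nonneg habn M) (hnum M) (mul_pos hca hcb)
      (mul_le_mul (hcal M) (hcbl M) hcb.le (norm_nonneg _))
  have hTb : ∀ M : ℕ, ‖T a b Q M‖ ≤ (ca * cb)⁻¹ * ‖a * b * Q‖ ^ M := by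
    intro M
    rw [T, norm_div, norm_mul, norm_mul, norm_pow, norm_pow, inv_mul_eq_div]
    exact div_le_div₀ (pow_nonneg habn M) (hnum M) (mul_pos hca hcb)
      (mul_le_mul (hcal (M + 1)) (hcbl (M + 1)) hcb.le (norm_nonneg _))
  -- uniform bound on R at stage M
  set B : ℝ := (cb / Db)⁻¹ * (1 - ‖a‖)⁻¹ with hBdef
  have hB0 : 0 ≤ B := by
    apply mul_nonneg (inv_nonneg.mpr hcD.le) (inv_nonneg.mpr (by linarith))
  have hterm : ∀ M n : ℕ, ‖(a * Q ^ M) ^ n / qPoch (b * Q ^ M) Q (n + 1)‖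
      ≤ (cb / Db)⁻¹ * ‖a‖ ^ n := by
    intro M n
    rw [norm_div, norm_pow, inv_mul_eq_div,
      div_le_div_iff₀ (lt_of_lt_of_le hcD (htail M (n + 1))) hcD]
    have h1 : ‖a * Q ^ M‖ ≤ ‖a‖ := by
      rw [norm_mul, norm_pow]
      calc ‖a‖ * ‖Q‖ ^ M ≤ ‖a‖ * 1 :=
          mul_le_mul_of_nonneg_left (pow_le_one₀ hQ0 hQle1) (norm_nonneg _)
      _ = ‖a‖ := mul_one _
    calc ‖a * Q ^ M‖ ^ n * (cb / Db) ≤ ‖a‖ ^ n * (cb / Db) :=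
        mul_le_mul_of_nonneg_right (pow_le_pow_left₀ (norm_nonneg _) h1 n) hcD.le
    _ ≤ ‖a‖ ^ n * ‖qPoch (b * Q ^ M) Q (n + 1)‖ :=
        mul_le_mul_of_nonneg_left (htail M (n + 1)) (pow_nonneg (norm_nonneg _) _)
  have hgeom : Summable (fun n : ℕ => (cb / Db)⁻¹ * ‖a‖ ^ n) :=
    (summable_geometric_of_lt_one (norm_nonneg a) ha).mul_left _
  have hRb : ∀ M : ℕ, ‖R (a * Q ^ M) (b * Q ^ M) Q‖ ≤ B := by
    intro M
    have hsn : Summable (fun n : ℕ => ‖(a * Q ^ M) ^ n / qPoch (b * Q ^ M) Q (n + 1)‖) :=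
      Summable.of_nonneg_of_le (fun n => norm_nonneg _) (hterm M) hgeom
    calc ‖R (a * Q ^ M) (b * Q ^ M) Q‖
        ≤ ∑' n : ℕ, ‖(a * Q ^ M) ^ n / qPoch (b * Q ^ M) Q (n + 1)‖ :=
          norm_tsum_le_tsum_norm hsn
    _ ≤ ∑' n : ℕ, (cb / Db)⁻¹ * ‖a‖ ^ n := Summable.tsum_le_tsum (hterm M) hsn hgeom
    _ = B := by
        rw [tsum_mul_left, tsum_geometric_of_lt_one (norm_nonneg a) ha]
  -- summability of T
  have hT : Summable (T a b Q) :=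
    Summable.of_norm_bounded ((summable_geometric_of_lt_one habn hab).mul_left _) hTb
  -- the remainder tends to zero
  have hrem : Tendsto (fun M : ℕ => W a b Q M * R (a * Q ^ M) (b * Q ^ M) Q)
      atTop (nhds 0) := by
    apply squeeze_zero_norm (a := fun M : ℕ => ((ca * cb)⁻¹ * B) * ‖a * b * Q‖ ^ M)
    · intro M
      rw [norm_mul]
      calc ‖W a b Q M‖ * ‖R (a * Q ^ M) (b * Q ^ M) Q‖
          ≤ ((ca * cb)⁻¹ * ‖a * b * Q‖ ^ M) * B :=
            mul_le_mul (hWb M) (hRb M) (norm_nonneg _)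
              (mul_nonneg (inv_nonneg.mpr (mul_pos hca hcb).le) (pow_nonneg habn M))
      _ = ((ca * cb)⁻¹ * B) * ‖a * b * Q‖ ^ M := by ring
    · simpa using (tendsto_pow_atTop_nhds_zero_of_lt_one habn hab).const_mul ((ca * cb)⁻¹ * B)
  have h1 : Tendsto (fun M : ℕ => ∑ m ∈ range M, T a b Q m) atTop (nhds (∑' m, T a b Q m)) :=
    hT.hasSum.tendsto_sum_nat
  have h3 : Tendsto (fun M : ℕ => ∑ m ∈ range M, T a b Q m) atTop (nhds (R a b Q)) := by
    have heq : (fun M : ℕ => ∑ m ∈ range M, T a b Q m)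
        = fun M : ℕ => R a b Q - W a b Q M * R (a * Q ^ M) (b * Q ^ M) Q := by
      funext M
      rw [iter M]; ring
    rw [heq]
    simpa using tendsto_const_nhds.sub hrem
  exact tendsto_nhds_unique h1 h3

end Omega211

theorem omega_spec_2_11 (q z : ℂ) (hq : ‖q‖ < 1) (hz : z ≠ 0) (hqz : ‖q / z‖ < 1)
    (hdz : ∀ k : ℕ, 1 - z * q ^ (2 * k + 1) ≠ 0)
    (hdz' : ∀ k : ℕ, 1 - (q / z) * q ^ (2 * k) ≠ 0) :
    ∑' n : ℕ, q ^ (2 * n ^ 2 + 2 * n) /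
        (qPoch (q / z) (q ^ 2) (n + 1) * qPoch (z * q) (q ^ 2) (n + 1))
      = ∑' n : ℕ, z⁻¹ ^ n * q ^ n / qPoch (z * q) (q ^ 2) (n + 1) := by
  set a : ℂ := q / z with hadef
  set b : ℂ := z * q with hbdef
  set Q : ℂ := q ^ 2 with hQdef
  have hQ : ‖Q‖ < 1 := by
    rw [hQdef, norm_pow]
    exact pow_lt_one₀ (norm_nonneg _) hq two_ne_zero
  have hab' : a * b * Q = q ^ 4 := by
    rw [hadef, hbdef, hQdef]
    field_simp
  have hab : ‖a * b * Q‖ < 1 := by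
    rw [hab', norm_pow]
    exact pow_lt_one₀ (norm_nonneg _) hq (by norm_num)
  have hbne : ∀ k : ℕ, 1 - b * Q ^ k ≠ 0 := by
    intro k
    have h : b * Q ^ k = z * q ^ (2 * k + 1) := by
      rw [hbdef, hQdef, ← pow_mul]; ring
    rw [h]; exact hdz k
  have hane : ∀ k : ℕ, 1 - a * Q ^ k ≠ 0 := by
    intro k
    have h : a * Q ^ k = (q / z) * q ^ (2 * k) := by
      rw [hadef, hQdef, ← pow_mul]
    rw [h]; exact hdz' k
  have hmain := Omega211.main a b Q hQ hqz hab hbne hane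
  have hL : ∑' n : ℕ, q ^ (2 * n ^ 2 + 2 * n) /
      (qPoch (q / z) (q ^ 2) (n + 1) * qPoch (z * q) (q ^ 2) (n + 1))
      = ∑' m : ℕ, Omega211.T a b Q m := by
    apply tsum_congr
    intro n
    rw [Omega211.T]
    congr 1
    have h1 : a * b = Q := by rw [hadef, hbdef, hQdef]; field_simp
    rw [h1, hQdef, ← pow_mul, ← pow_mul, ← pow_add]
    congr 1
    ring
  have hR : ∑' n : ℕ, z⁻¹ ^ n * q ^ n / qPoch (z * q) (q ^ 2) (n + 1)
      = Omega211.R a b Q := by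
    rw [Omega211.R]
    apply tsum_congr
    intro n
    congr 1
    rw [hadef, div_pow, inv_pow, div_eq_mul_inv, mul_comm]
  rw [hL, hR, hmain]
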